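/- For β = s + r with s ∈ ℕ⁺, r ∈ (0,1], f ∈ H^β([0,1]^d, 1), K ∈ ℕ, and a point x in a hypercube Q_η with corner x_η = η/K (where η ∈ {0,…,K−1}^d and each coordinate of x lies in [η_i/K, (η_i+1)/K]), the truncated Taylor expansion T(x) = Σ_{‖α‖₁ ≤ s} (∂^α f(x_η)/α!)(x − x_η)^α satisfies |f(x) − T(x)| ≤ d^{s+β/2} K^{−β}. -/

import Mathlib

open Finset

/-- The unit cube `[0,1]^d`. -/
def cube (d : ℕ) : Set (Fin d → ℝ) := Set.univ.pi fun _ => Set.Icc (0 : ℝ) 1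

/-- The partial derivative of `f` in direction `i`. -/
noncomputable def partialDeriv {d : ℕ} (i : Fin d) (f : (Fin d → ℝ) → ℝ) :
    (Fin d → ℝ) → ℝ :=
  fun x => fderiv ℝ f x (Pi.single i 1)

/-- The iterated partial derivative `∂^α f = ∂₁^{α₁} ⋯ ∂_d^{α_d} f`. -/
noncomputable def multiPartialDeriv {d : ℕ} (α : Fin d → ℕ) (f : (Fin d → ℝ) → ℝ) :
    (Fin d → ℝ) → ℝ :=
  (List.ofFn fun i : Fin d => (partialDeriv i)^[α i]).foldr (fun op g => op g) f

/-- The Euclidean distance `‖x − y‖₂` on `ℝ^d`. -/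
noncomputable def eucDist {d : ℕ} (x y : Fin d → ℝ) : ℝ :=
  Real.sqrt (∑ i, (x i - y i) ^ 2)

namespace TaylorAux

variable {d : ℕ}

/-- Nested partial derivatives along a list, outermost first. -/
noncomputable def pdList (l : List (Fin d)) (f : (Fin d → ℝ) → ℝ) : (Fin d → ℝ) → ℝ :=
  l.foldr (fun i g => partialDeriv i g) f

@[simp] lemma pdList_nil (f : (Fin d → ℝ) → ℝ) : pdList [] f = f := rfl

@[simp] lemma pdList_cons (i : Fin d) (l : List (Fin d)) (f : (Fin d → ℝ) → ℝ) :
    pdList (i :: l) f = partialDeriv i (pdList l f) := rfl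

lemma pdList_append (l₁ l₂ : List (Fin d)) (f : (Fin d → ℝ) → ℝ) :
    pdList (l₁ ++ l₂) f = pdList l₁ (pdList l₂ f) := by
  simp [pdList, List.foldr_append]

lemma iterate_partialDeriv (i : Fin d) (m : ℕ) (f : (Fin d → ℝ) → ℝ) :
    (partialDeriv i)^[m] f = pdList (List.replicate m i) f := by
  induction m with
  | zero => rfl
  | succ m ih => rw [Function.iterate_succ_apply', ih, List.replicate_succ, pdList_cons]

/-- The canonical list of a multi-index. -/
def mlist (α : Fin d → ℕ) : List (Fin d) :=
  (List.finRange d).flatMap fun i => List.replicate (α i) i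

lemma multiPartialDeriv_eq_pdList (α : Fin d → ℕ) (f : (Fin d → ℝ) → ℝ) :
    multiPartialDeriv α f = pdList (mlist α) f := by
  rw [multiPartialDeriv, List.ofFn_eq_map, mlist]
  induction (List.finRange d) with
  | nil => rfl
  | cons a l ih =>
    rw [List.map_cons, List.foldr_cons, ih, List.flatMap_cons, pdList_append,
      iterate_partialDeriv]

lemma count_mlist (α : Fin d → ℕ) (j : Fin d) : (mlist α).count j = α j := by
  rw [mlist, List.count_flatMap]
  have : ∀ i : Fin d, (List.count j ∘ fun i => List.replicate (α i) i) i
      = if i = j then α i else 0 := by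
    intro i
    show List.count j (List.replicate (α i) i) = _
    rw [List.count_replicate]
    simp
  rw [funext this, ← Fin.sum_univ_def]
  simp

lemma length_mlist (α : Fin d → ℕ) : (mlist α).length = ∑ i, α i := by
  rw [mlist, List.length_flatMap]
  rw [← Fin.sum_univ_def]
  simp

lemma mlist_update_perm (α : Fin d → ℕ) (i : Fin d) :
    (mlist (Function.update α i (α i + 1))).Perm (i :: mlist α) := by
  rw [List.perm_iff_count]
  intro j
  rw [count_mlist, List.count_cons, count_mlist]
  rcases eq_or_ne j i with rfl | h
  · simp
  · simp [Function.update_of_ne h, h.symm]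

@[simp] lemma multiPartialDeriv_zero (f : (Fin d → ℝ) → ℝ) :
    multiPartialDeriv (fun _ => 0) f = f := by
  rw [multiPartialDeriv_eq_pdList]
  have : mlist (fun _ : Fin d => 0) = [] := by
    simp [mlist]
  rw [this, pdList_nil]

end TaylorAux

namespace TaylorAux

variable {d : ℕ}

lemma contDiff_partialDeriv {n : ℕ} {f : (Fin d → ℝ) → ℝ} (i : Fin d)
    (hf : ContDiff ℝ (n + 1 : ℕ) f) : ContDiff ℝ (n : ℕ) (partialDeriv i f) := by
  have h1 : ContDiff ℝ (n : ℕ) (fderiv ℝ f) := by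
    apply hf.fderiv_right
    exact_mod_cast le_rfl
  exact h1.clm_apply contDiff_const

lemma contDiff_pdList {n : ℕ} {f : (Fin d → ℝ) → ℝ} (l : List (Fin d))
    (hf : ContDiff ℝ (n + l.length : ℕ) f) : ContDiff ℝ (n : ℕ) (pdList l f) := by
  induction l generalizing n with
  | nil => simpa using hf
  | cons a l ih =>
    rw [pdList_cons]
    apply contDiff_partialDeriv
    apply ih
    have : n + 1 + l.length = n + (a :: l).length := by simp; omega
    rw [this]
    exact hf

lemma partialDeriv_comm {g : (Fin d → ℝ) → ℝ} (hg : ContDiff ℝ (2 : ℕ) g) (i j : Fin d) :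
    partialDeriv i (partialDeriv j g) = partialDeriv j (partialDeriv i g) := by
  have hF : ContDiff ℝ (1 : ℕ) (fderiv ℝ g) := by
    apply hg.fderiv_right
    exact_mod_cast le_rfl
  have key : ∀ a b : Fin d, ∀ x, partialDeriv a (partialDeriv b g) x
      = fderiv ℝ (fderiv ℝ g) x (Pi.single a 1) (Pi.single b 1) := by
    intro a b x
    show fderiv ℝ (fun y => fderiv ℝ g y (Pi.single b 1)) x (Pi.single a 1) = _
    rw [fderiv_clm_apply ((hF.differentiable (by norm_num)) x) (differentiableAt_const _)]
    simp
  funext x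
  rw [key, key]
  exact second_derivative_symmetric
    (fun y => ((hg.differentiable (by norm_num)) y).hasFDerivAt)
    (((hF.differentiable (by norm_num)) x).hasFDerivAt) _ _

lemma pdList_perm {f : (Fin d → ℝ) → ℝ} : ∀ {l l' : List (Fin d)}, l.Perm l' →
    ContDiff ℝ (l.length : ℕ) f → pdList l f = pdList l' f := by
  intro l l' h
  induction h with
  | nil => intro _; rfl
  | cons a h ih =>
    intro hf
    rw [pdList_cons, pdList_cons, ih (hf.of_le (by exact_mod_cast Nat.le_succ _))]
  | swap a b l =>
    intro hf
    have h2 : ContDiff ℝ (2 : ℕ) (pdList l f) := by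
      apply contDiff_pdList
      have : 2 + l.length = (b :: a :: l).length := by simp; omega
      rw [this]; exact hf
    rw [pdList_cons, pdList_cons, pdList_cons, pdList_cons, partialDeriv_comm h2]
  | trans h1 h2 ih1 ih2 =>
    intro hf
    rw [ih1 hf, ih2 (by rw [← h1.length_eq]; exact hf)]

/-- Commutation: adding one more partial derivative on the outside. -/
lemma partialDeriv_multiPartialDeriv {f : (Fin d → ℝ) → ℝ} (α : Fin d → ℕ) (i : Fin d)
    (hf : ContDiff ℝ ((∑ j, α j) + 1 : ℕ) f) :
    multiPartialDeriv (Function.update α i (α i + 1)) f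
      = partialDeriv i (multiPartialDeriv α f) := by
  rw [multiPartialDeriv_eq_pdList, multiPartialDeriv_eq_pdList]
  rw [pdList_perm (mlist_update_perm α i)
    (by rw [length_mlist]
        have : ∑ j, Function.update α i (α i + 1) j = (∑ j, α j) + 1 := by
          rw [Finset.sum_update_of_mem (Finset.mem_univ i),
            Finset.sdiff_singleton_eq_erase,
            ← Finset.add_sum_erase _ α (Finset.mem_univ i)]
          omega
        rw [this]; exact hf)]
  rw [pdList_cons]

end TaylorAux

lemma pair_term_eq {d : ℕ} {k : ℕ} (v : Fin d → ℝ) (Dv : ℝ) (α : Fin d → ℕ) (i : Fin d) :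
    ((k.factorial : ℝ) / ∏ j, ((α j).factorial : ℝ)) * (v i * Dv) * ∏ j, v j ^ α j
      = ((Function.update α i (α i + 1) i : ℕ) : ℝ) *
          ((k.factorial : ℝ) / ∏ j, (((Function.update α i (α i + 1)) j).factorial : ℝ)) *
            Dv * ∏ j, v j ^ (Function.update α i (α i + 1)) j := by
  have h1 : (fun j => (((Function.update α i (α i + 1)) j).factorial : ℝ))
      = Function.update (fun j => ((α j).factorial : ℝ)) i (((α i + 1).factorial : ℝ)) := by
    funext j
    rcases eq_or_ne j i with rfl | h
    · simp
    · simp [Function.update_of_ne h]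
  have h2 : (fun j => v j ^ (Function.update α i (α i + 1)) j)
      = Function.update (fun j => v j ^ α j) i (v i ^ (α i + 1)) := by
    funext j
    rcases eq_or_ne j i with rfl | h
    · simp
    · simp [Function.update_of_ne h]
  rw [h1, h2, Finset.prod_update_of_mem (Finset.mem_univ i),
    Finset.prod_update_of_mem (Finset.mem_univ i), Function.update_self,
    ← Finset.mul_prod_erase _ (fun j => ((α j).factorial : ℝ)) (Finset.mem_univ i),
    ← Finset.mul_prod_erase _ (fun j => v j ^ α j) (Finset.mem_univ i)]
  have hA : ((α i).factorial : ℝ) ≠ 0 := by positivity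
  have hE : (∏ j ∈ Finset.univ.erase i, ((α j).factorial : ℝ)) ≠ 0 := by
    apply Finset.prod_ne_zero_iff.mpr
    intro j _
    positivity
  rw [Nat.factorial_succ, pow_succ]
  push_cast
  simp only [← Finset.sdiff_singleton_eq_erase] at *
  field_simp

namespace TaylorAux

variable {d : ℕ}

lemma fderiv_apply_eq_sum {h : (Fin d → ℝ) → ℝ} {y : Fin d → ℝ}
    (hy : DifferentiableAt ℝ h y) (v : Fin d → ℝ) :
    fderiv ℝ h y v = ∑ i, v i * partialDeriv i h y := by
  have hv : v = ∑ i, v i • (Pi.single i 1 : Fin d → ℝ) := by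
    funext j
    rw [Finset.sum_apply]
    simp [Pi.single_apply]
  conv_lhs => rw [hv]
  rw [map_sum]
  refine Finset.sum_congr rfl fun i _ => ?_
  rw [map_smul]
  simp [partialDeriv]

lemma hasDerivAt_line {h : (Fin d → ℝ) → ℝ} (hh : Differentiable ℝ h) (c v : Fin d → ℝ)
    (t : ℝ) :
    HasDerivAt (fun t : ℝ => h (c + t • v)) (∑ i, v i * partialDeriv i h (c + t • v)) t := by
  have hL : HasDerivAt (fun t : ℝ => c + t • v) v t := by
    simpa using ((hasDerivAt_id t).smul_const v).const_add c
  have h2 := (hh (c + t • v)).hasFDerivAt.comp_hasDerivAt t hL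
  rwa [fderiv_apply_eq_sum (hh _) v] at h2

lemma contDiff_multiPartialDeriv {n : ℕ} {f : (Fin d → ℝ) → ℝ} (α : Fin d → ℕ)
    (hf : ContDiff ℝ (n + ∑ i, α i : ℕ) f) : ContDiff ℝ (n : ℕ) (multiPartialDeriv α f) := by
  rw [multiPartialDeriv_eq_pdList]
  exact contDiff_pdList _ (by rwa [length_mlist])

lemma iteratedDeriv_line {s : ℕ} {f : (Fin d → ℝ) → ℝ} (hf : ContDiff ℝ (s : ℕ) f)
    (c v : Fin d → ℝ) :
    ∀ k, k ≤ s → iteratedDeriv k (fun t : ℝ => f (c + t • v)) = fun t : ℝ =>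
      ∑ α ∈ Finset.piAntidiag (Finset.univ : Finset (Fin d)) k,
        ((k.factorial : ℝ) / ∏ i, ((α i).factorial : ℝ)) *
          multiPartialDeriv α f (c + t • v) * ∏ i, v i ^ α i := by
  intro k
  induction k with
  | zero =>
    intro _
    rw [iteratedDeriv_zero, Finset.piAntidiag_zero]
    funext t
    rw [Finset.sum_singleton]
    have h0 : multiPartialDeriv (0 : Fin d → ℕ) f = f := multiPartialDeriv_zero f
    simp [h0]
  | succ k ih =>
    intro hk
    have hk' : k ≤ s := Nat.le_of_succ_le hk
    rw [iteratedDeriv_succ, ih hk']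
    funext t
    have hdiffα : ∀ α ∈ Finset.piAntidiag (Finset.univ : Finset (Fin d)) k,
        Differentiable ℝ (multiPartialDeriv α f) := by
      intro α hα
      rw [Finset.mem_piAntidiag] at hα
      have h1 : ContDiff ℝ ((1 : ℕ) : WithTop ℕ∞) (multiPartialDeriv α f) := by
        apply contDiff_multiPartialDeriv
        rw [hα.1]
        exact hf.of_le (by exact_mod_cast Nat.add_comm 1 k ▸ hk)
      exact h1.differentiable (by norm_num)
    have hder : HasDerivAt (fun u => ∑ α ∈ Finset.piAntidiag (Finset.univ : Finset (Fin d)) k,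
        ((k.factorial : ℝ) / ∏ i, ((α i).factorial : ℝ)) *
          multiPartialDeriv α f (c + u • v) * ∏ i, v i ^ α i)
        (∑ α ∈ Finset.piAntidiag (Finset.univ : Finset (Fin d)) k,
          ((k.factorial : ℝ) / ∏ i, ((α i).factorial : ℝ)) *
            (∑ i, v i * partialDeriv i (multiPartialDeriv α f) (c + t • v)) *
              ∏ i, v i ^ α i) t := by
      apply HasDerivAt.fun_sum
      intro α hα
      exact ((hasDerivAt_line (hdiffα α hα) c v t).const_mul _).mul_const _
    rw [hder.deriv]
    have hs1 : ∀ α ∈ Finset.piAntidiag (Finset.univ : Finset (Fin d)) k, ∀ i : Fin d,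
        partialDeriv i (multiPartialDeriv α f) =
          multiPartialDeriv (Function.update α i (α i + 1)) f := by
      intro α hα i
      rw [Finset.mem_piAntidiag] at hα
      refine (partialDeriv_multiPartialDeriv α i ?_).symm
      rw [hα.1]
      exact hf.of_le (by exact_mod_cast hk)
    have hsum_upd : ∀ (α : Fin d → ℕ) (i : Fin d),
        ∑ j, Function.update α i (α i + 1) j = (∑ j, α j) + 1 := by
      intro α i
      rw [Finset.sum_update_of_mem (Finset.mem_univ i), Finset.sdiff_singleton_eq_erase,
        ← Finset.add_sum_erase _ α (Finset.mem_univ i)]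
      omega
    have hsum_upd' : ∀ (β : Fin d → ℕ) (i : Fin d), β i ≠ 0 →
        ∑ j, Function.update β i (β i - 1) j = (∑ j, β j) - 1 := by
      intro β i h0
      rw [Finset.sum_update_of_mem (Finset.mem_univ i), Finset.sdiff_singleton_eq_erase]
      have := Finset.add_sum_erase Finset.univ β (Finset.mem_univ i)
      omega
    calc (∑ α ∈ Finset.piAntidiag (Finset.univ : Finset (Fin d)) k,
          ((k.factorial : ℝ) / ∏ i, ((α i).factorial : ℝ)) *
            (∑ i, v i * partialDeriv i (multiPartialDeriv α f) (c + t • v)) * ∏ i, v i ^ α i)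
        = ∑ p ∈ (Finset.piAntidiag (Finset.univ : Finset (Fin d)) k) ×ˢ
            (Finset.univ : Finset (Fin d)),
            ((k.factorial : ℝ) / ∏ i, ((p.1 i).factorial : ℝ)) *
              (v p.2 * multiPartialDeriv (Function.update p.1 p.2 (p.1 p.2 + 1)) f (c + t • v)) *
                ∏ i, v i ^ p.1 i := by
          rw [Finset.sum_product]
          refine Finset.sum_congr rfl fun α hα => ?_
          rw [Finset.mul_sum, Finset.sum_mul]
          refine Finset.sum_congr rfl fun i _ => ?_
          rw [hs1 α hα i]
      _ = ∑ p ∈ ((Finset.piAntidiag (Finset.univ : Finset (Fin d)) (k+1)) ×ˢ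
            (Finset.univ : Finset (Fin d))).filter (fun p => p.1 p.2 ≠ 0),
            ((p.1 p.2 : ℕ) : ℝ) * ((k.factorial : ℝ) / ∏ i, ((p.1 i).factorial : ℝ)) *
              multiPartialDeriv p.1 f (c + t • v) * ∏ i, v i ^ p.1 i := by
          refine Finset.sum_nbij' (fun p => (Function.update p.1 p.2 (p.1 p.2 + 1), p.2))
            (fun p => (Function.update p.1 p.2 (p.1 p.2 - 1), p.2)) ?_ ?_ ?_ ?_ ?_
          · intro p hp
            simp only [Finset.mem_product, Finset.mem_piAntidiag] at hp
            simp only [Finset.mem_filter, Finset.mem_product, Finset.mem_piAntidiag,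
              Function.update_self]
            refine ⟨⟨⟨?_, fun j _ => Finset.mem_univ j⟩, Finset.mem_univ _⟩, by omega⟩
            rw [hsum_upd, hp.1.1]
          · intro p hp
            simp only [Finset.mem_filter, Finset.mem_product, Finset.mem_piAntidiag] at hp
            simp only [Finset.mem_product, Finset.mem_piAntidiag]
            refine ⟨⟨?_, fun j _ => Finset.mem_univ j⟩, Finset.mem_univ _⟩
            rw [hsum_upd' p.1 p.2 hp.2, hp.1.1.1]
            omega
          · intro p hp
            have : Function.update p.1 p.2 (p.1 p.2 + 1) p.2 = p.1 p.2 + 1 :=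
              Function.update_self _ _ _
            ext j
            · simp only [this, Function.update_idem, Nat.add_sub_cancel]
              rcases eq_or_ne j p.2 with rfl | h
              · rw [Function.update_self]
              · rw [Function.update_of_ne h]
            · rfl
          · intro p hp
            simp only [Finset.mem_filter] at hp
            have h0 : p.1 p.2 ≠ 0 := hp.2
            have : Function.update p.1 p.2 (p.1 p.2 - 1) p.2 = p.1 p.2 - 1 :=
              Function.update_self _ _ _
            ext j
            · simp only [this, Function.update_idem]
              rcases eq_or_ne j p.2 with rfl | h
              · rw [Function.update_self]
                omega
              · rw [Function.update_of_ne h]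
            · rfl
          · intro p hp
            exact pair_term_eq v _ p.1 p.2
      _ = ∑ p ∈ (Finset.piAntidiag (Finset.univ : Finset (Fin d)) (k+1)) ×ˢ
            (Finset.univ : Finset (Fin d)),
            ((p.1 p.2 : ℕ) : ℝ) * ((k.factorial : ℝ) / ∏ i, ((p.1 i).factorial : ℝ)) *
              multiPartialDeriv p.1 f (c + t • v) * ∏ i, v i ^ p.1 i := by
          apply Finset.sum_filter_of_ne
          intro p _ hne h0
          apply hne
          rw [h0]
          simp
      _ = ∑ β ∈ Finset.piAntidiag (Finset.univ : Finset (Fin d)) (k+1),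
            ∑ i : Fin d, ((β i : ℕ) : ℝ) * ((k.factorial : ℝ) / ∏ j, ((β j).factorial : ℝ)) *
              multiPartialDeriv β f (c + t • v) * ∏ j, v j ^ β j := Finset.sum_product _ _ _
      _ = ∑ β ∈ Finset.piAntidiag (Finset.univ : Finset (Fin d)) (k+1),
            (((k+1).factorial : ℝ) / ∏ i, ((β i).factorial : ℝ)) *
              multiPartialDeriv β f (c + t • v) * ∏ i, v i ^ β i := by
          refine Finset.sum_congr rfl fun β hβ => ?_
          rw [Finset.mem_piAntidiag] at hβ
          have hsum : ∑ i, ((β i : ℕ) : ℝ) = ((k+1 : ℕ) : ℝ) := by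
            rw [← hβ.1]
            push_cast
            rfl
          simp only [mul_assoc]
          rw [← Finset.sum_mul, hsum, Nat.factorial_succ]
          have hprod : (∏ i, ((β i).factorial : ℝ)) ≠ 0 := by
            apply Finset.prod_ne_zero_iff.mpr
            intro j _
            positivity
          push_cast
          field_simp

end TaylorAux

namespace TaylorAux

lemma iteratedDerivWithin_Icc {g : ℝ → ℝ} {s : ℕ} (hg : ContDiff ℝ (s : ℕ) g) {k : ℕ}
    (hk : k ≤ s) {t : ℝ} (ht : t ∈ Set.Icc (0 : ℝ) 1) :
    iteratedDerivWithin k g (Set.Icc (0 : ℝ) 1) t = iteratedDeriv k g t := by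
  have H : HasFTaylorSeriesUpTo ((s : ℕ∞) : WithTop ℕ∞) g (ftaylorSeries ℝ g) :=
    contDiff_iff_ftaylorSeries.mp (by exact_mod_cast hg)
  have H2 : HasFTaylorSeriesUpToOn ((s : ℕ∞) : WithTop ℕ∞) g (ftaylorSeries ℝ g)
      (Set.Icc 0 1) := (hasFTaylorSeriesUpToOn_univ_iff.mpr H).mono (Set.subset_univ _)
  rw [iteratedDerivWithin_eq_iteratedFDerivWithin, iteratedDeriv_eq_iteratedFDeriv,
    ← H2.eq_iteratedFDerivWithin_of_uniqueDiffOn (by exact_mod_cast hk)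
      (uniqueDiffOn_Icc zero_lt_one) ht,
    H.eq_iteratedFDeriv (by exact_mod_cast hk) t]

end TaylorAux


open TaylorAux

/-- For `f ∈ H^β([0,1]^d,1)` with `β = s + r`, and `x` in the hypercube `Q_η` with corner
`x_η = η/K`, the truncated Taylor expansion `T` of `f` at `x_η` satisfies
`|f(x) − T(x)| ≤ d^{s+β/2} K^{−β}`. -/
theorem taylor_local_error_holder {d s : ℕ} (hs : 0 < s) (r : ℝ) (hr : r ∈ Set.Ioc (0 : ℝ) 1)
    (f : (Fin d → ℝ) → ℝ) (hf : ContDiff ℝ s f)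
    (hbound : ∀ α : Fin d → ℕ, (∑ i, α i) ≤ s →
      ∀ x ∈ cube d, |multiPartialDeriv α f x| ≤ 1)
    (hholder : ∀ α : Fin d → ℕ, (∑ i, α i) = s →
      ∀ x ∈ cube d, ∀ y ∈ cube d,
        |multiPartialDeriv α f x - multiPartialDeriv α f y| ≤ eucDist x y ^ r)
    (K : ℕ) (hK : 0 < K) (η : Fin d → ℕ) (hη : ∀ i, η i < K)
    (x : Fin d → ℝ) (hx : ∀ i, x i ∈ Set.Icc ((η i : ℝ) / K) (((η i : ℝ) + 1) / K)) :
    |f x - ∑ α ∈ Finset.univ.filter (fun α : Fin d → Fin (s + 1) =>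
          (∑ i, (α i : ℕ)) ≤ s),
        multiPartialDeriv (fun i => (α i : ℕ)) f (fun i => (η i : ℝ) / K) /
            (∏ i, ((α i : ℕ).factorial : ℝ)) *
          ∏ i, (x i - (η i : ℝ) / K) ^ (α i : ℕ)|
      ≤ (d : ℝ) ^ ((s : ℝ) + ((s : ℝ) + r) / 2) * (K : ℝ) ^ (-((s : ℝ) + r)) := by
  have hr0 : 0 < r := hr.1
  rcases Nat.eq_zero_or_pos d with hd0 | hdpos
  · subst hd0
    have hfilter : (Finset.univ.filter (fun α : Fin 0 → Fin (s + 1) =>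
        (∑ i, (α i : ℕ)) ≤ s)) = {fun i => i.elim0} := by
      apply Finset.eq_singleton_iff_unique_mem.mpr
      refine ⟨Finset.mem_filter.mpr ⟨Finset.mem_univ _, by simp⟩, fun β _ => ?_⟩
      funext i
      exact i.elim0
    rw [hfilter, Finset.sum_singleton]
    have h0 : (fun i : Fin 0 => (((fun j : Fin 0 => j.elim0) i : Fin (s+1)) : ℕ))
        = (fun _ : Fin 0 => (0 : ℕ)) := by funext i; exact i.elim0
    rw [h0, multiPartialDeriv_zero]
    have hxc : x = (fun i : Fin 0 => (η i : ℝ) / K) := by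
      funext i; exact i.elim0
    rw [← hxc]
    simp only [Finset.univ_eq_empty, Finset.prod_empty, div_one, mul_one, sub_self, abs_zero]
    positivity
  · -- main case
    have hK1 : (1:ℝ) ≤ (K:ℝ) := by exact_mod_cast hK
    have hKpos : (0:ℝ) < (K:ℝ) := by exact_mod_cast hK
    have hd1 : (1:ℝ) ≤ (d:ℝ) := by exact_mod_cast hdpos
    obtain ⟨n, rfl⟩ : ∃ n, s = n + 1 := ⟨s - 1, by omega⟩
    set c : Fin d → ℝ := fun i => (η i : ℝ) / K with hc
    set v : Fin d → ℝ := fun i => x i - (η i : ℝ) / K with hv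
    have hv' : ∀ i, x i - (η i : ℝ)/K = v i := fun i => rfl
    have hv0 : ∀ i, 0 ≤ v i := by
      intro i
      rw [← hv']
      have := (hx i).1
      linarith
    have hv1 : ∀ i, v i ≤ 1 / K := by
      intro i
      have h2 := (hx i).2
      have hdiv : ((η i : ℝ) + 1)/K = (η i:ℝ)/K + 1/K := add_div _ _ _
      rw [hdiv] at h2
      rw [← hv']
      linarith
    have hci0 : ∀ i, 0 ≤ c i := fun i => div_nonneg (Nat.cast_nonneg _) hKpos.le
    have hxi1 : ∀ i, c i + v i ≤ 1 := by
      intro i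
      have : c i + v i = x i := by rw [hc, ← hv']; ring
      rw [this]
      have h2 := (hx i).2
      have : ((η i : ℝ) + 1)/K ≤ 1 := by
        rw [div_le_one hKpos]
        have : (η i : ℕ) + 1 ≤ K := hη i
        exact_mod_cast this
      linarith
    have hcube : ∀ t : ℝ, t ∈ Set.Icc (0:ℝ) 1 → (c + t • v) ∈ cube d := by
      intro t ht i _
      have h1 : (c + t • v) i = c i + t * v i := rfl
      have htv0 : 0 ≤ t * v i := mul_nonneg ht.1 (hv0 i)
      have htv1 : t * v i ≤ v i := by
        calc t * v i ≤ 1 * v i := mul_le_mul_of_nonneg_right ht.2 (hv0 i)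
          _ = v i := one_mul _
      constructor
      · rw [h1]; have := hci0 i; linarith
      · rw [h1]; have := hxi1 i; linarith
    have hgC : ContDiff ℝ ((n+1 : ℕ) : WithTop ℕ∞) (fun t : ℝ => f (c + t • v)) :=
      hf.comp (contDiff_const.add (contDiff_id.smul contDiff_const))
    have hid := iteratedDeriv_line (s := n + 1) hf c v
    have hlinediff : Differentiable ℝ (fun t : ℝ => c + t • v) := by fun_prop
    have hf1 : ContDiffOn ℝ (n : ℕ) (fun t : ℝ => f (c + t • v)) (Set.Icc 0 1) :=
      (hgC.of_le (by exact_mod_cast Nat.le_succ n)).contDiffOn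
    have hdern : Differentiable ℝ (iteratedDeriv n (fun t : ℝ => f (c + t • v))) := by
      rw [hid n (Nat.le_succ n)]
      apply Differentiable.fun_sum
      intro α hα
      rw [Finset.mem_piAntidiag] at hα
      have hDα : Differentiable ℝ (multiPartialDeriv α f) := by
        have h1 : ContDiff ℝ ((1 : ℕ) : WithTop ℕ∞) (multiPartialDeriv α f) := by
          apply contDiff_multiPartialDeriv
          rw [hα.1]
          exact hf.of_le (by exact_mod_cast Nat.le_of_eq (Nat.add_comm 1 n))
        exact h1.differentiable (by norm_num)
      exact (((hDα.comp hlinediff).const_mul _).mul_const _)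
    have hf2 : DifferentiableOn ℝ
        (iteratedDerivWithin n (fun t : ℝ => f (c + t • v)) (Set.Icc 0 1)) (Set.Ioo 0 1) := by
      apply (hdern.differentiableOn).congr
      intro t ht
      exact iteratedDerivWithin_Icc hgC (Nat.le_succ n) (Set.mem_Icc_of_Ioo ht)
    obtain ⟨ξ, hξ, hTay⟩ := taylor_mean_remainder_lagrange (n := n) (x₀ := 0) (x := 1) zero_ne_one
      (by rwa [Set.uIcc_of_le zero_le_one])
      (by rwa [Set.uIcc_of_le zero_le_one, Set.uIoo_of_le zero_le_one])
    rw [Set.uIoo_of_le zero_le_one] at hξ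
    rw [Set.uIcc_of_le zero_le_one] at hTay
    have h0mem : (0:ℝ) ∈ Set.Icc (0:ℝ) 1 := by norm_num
    have hξmem : ξ ∈ Set.Icc (0:ℝ) 1 := Set.mem_Icc_of_Ioo hξ
    rw [taylor_within_apply, iteratedDerivWithin_Icc hgC le_rfl hξmem] at hTay
    have hTsum : ∀ k ∈ Finset.range (n+1),
        (((k.factorial : ℝ))⁻¹ * ((1:ℝ) - 0)^k) •
          iteratedDerivWithin k (fun t : ℝ => f (c + t • v)) (Set.Icc 0 1) 0
        = ((k.factorial : ℝ))⁻¹ * iteratedDeriv k (fun t : ℝ => f (c + t • v)) 0 := by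
      intro k hk
      rw [Finset.mem_range] at hk
      rw [iteratedDerivWithin_Icc hgC (by omega) h0mem]
      simp [smul_eq_mul]
    rw [Finset.sum_congr rfl hTsum] at hTay
    norm_num at hTay
    have hg1 : c + v = x := by
      funext i
      simp only [Pi.add_apply, hc, hv]
      ring
    rw [hg1] at hTay
    -- rewrite the goal's Taylor polynomial
    simp only [hv']
    have hstep : ∀ k ∈ Finset.range (n+2), ((k.factorial:ℝ))⁻¹ *
        iteratedDeriv k (fun t : ℝ => f (c + t • v)) 0
        = ∑ α ∈ Finset.piAntidiag (Finset.univ : Finset (Fin d)) k,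
            multiPartialDeriv α f c / (∏ i, ((α i).factorial : ℝ)) * ∏ i, v i ^ α i := by
      intro k hk
      rw [Finset.mem_range] at hk
      rw [hid k (by omega)]
      simp only [zero_smul, add_zero]
      rw [Finset.mul_sum]
      refine Finset.sum_congr rfl fun α hα => ?_
      have hk0 : ((k.factorial : ℝ)) ≠ 0 := by positivity
      have hne : (∏ i, ((α i).factorial:ℝ)) ≠ 0 := by positivity
      field_simp
    have hT : (∑ α ∈ Finset.univ.filter (fun α : Fin d → Fin (n + 1 + 1) =>
          (∑ i, (α i : ℕ)) ≤ n + 1),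
          multiPartialDeriv (fun i => (α i : ℕ)) f c /
              (∏ i, ((α i : ℕ).factorial : ℝ)) * ∏ i, v i ^ (α i : ℕ))
        = ∑ k ∈ Finset.range (n+2), ((k.factorial:ℝ))⁻¹ *
            iteratedDeriv k (fun t : ℝ => f (c + t • v)) 0 := by
      rw [Finset.sum_congr rfl hstep, Finset.sum_sigma']
      refine Finset.sum_nbij' (i := fun α : Fin d → Fin (n + 1 + 1) =>
          (⟨∑ i, ((α i : ℕ)), fun i => (α i : ℕ)⟩ : Σ _ : ℕ, (Fin d → ℕ)))
        (j := fun p => fun i => (⟨min (p.2 i) (n+1), by omega⟩ : Fin (n + 1 + 1)))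
        ?_ ?_ ?_ ?_ ?_
      · intro α hα
        rw [Finset.mem_filter] at hα
        rw [Finset.mem_sigma]
        refine ⟨Finset.mem_range.mpr (Nat.lt_succ_of_le hα.2), ?_⟩
        rw [Finset.mem_piAntidiag]
        exact ⟨rfl, fun i _ => Finset.mem_univ i⟩
      · intro p hp
        rw [Finset.mem_sigma, Finset.mem_range, Finset.mem_piAntidiag] at hp
        rw [Finset.mem_filter]
        refine ⟨Finset.mem_univ _, ?_⟩
        have hle : ∀ i, p.2 i ≤ p.1 := by
          intro i
          rw [← hp.2.1]
          exact Finset.single_le_sum (fun j _ => Nat.zero_le _) (Finset.mem_univ i)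
        calc ∑ i, ((⟨min (p.2 i) (n+1), by omega⟩ : Fin (n + 1 + 1)) : ℕ)
            ≤ ∑ i, p.2 i := Finset.sum_le_sum fun i _ => min_le_left _ _
          _ = p.1 := hp.2.1
          _ ≤ n + 1 := by omega
      · intro α hα
        funext i
        apply Fin.ext
        exact min_eq_left (Fin.is_le (α i))
      · intro p hp
        rw [Finset.mem_sigma, Finset.mem_range, Finset.mem_piAntidiag] at hp
        have hle : ∀ i, p.2 i ≤ n + 1 := by
          intro i
          have : p.2 i ≤ p.1 := by
            rw [← hp.2.1]
            exact Finset.single_le_sum (fun j _ => Nat.zero_le _) (Finset.mem_univ i)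
          omega
        refine Sigma.ext ?_ (heq_of_eq ?_)
        · show (∑ i, ((⟨min (p.2 i) (n+1), by omega⟩ : Fin (n + 1 + 1)) : ℕ)) = p.1
          rw [← hp.2.1]
          exact Finset.sum_congr rfl fun i _ => min_eq_left (hle i)
        · show (fun i => ((⟨min (p.2 i) (n+1), by omega⟩ : Fin (n + 1 + 1)) : ℕ)) = p.2
          funext i
          exact min_eq_left (hle i)
      · intro α hα
        rfl
    rw [hT]
    have hkey : f x - ∑ k ∈ Finset.range (n+2), ((k.factorial:ℝ))⁻¹ *
        iteratedDeriv k (fun t : ℝ => f (c + t • v)) 0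
        = (iteratedDeriv (n+1) (fun t : ℝ => f (c + t • v)) ξ
            - iteratedDeriv (n+1) (fun t : ℝ => f (c + t • v)) 0) / ((n+1).factorial : ℝ) := by
      rw [Finset.sum_range_succ]
      linear_combination hTay
    rw [hkey, abs_div, abs_of_nonneg (by positivity : (0:ℝ) ≤ ((n+1).factorial : ℝ))]
    -- distance bound
    have hccube : c ∈ cube d := by
      have h1 := hcube 0 h0mem
      have h2 : c + (0:ℝ) • v = c := by simp
      rwa [h2] at h1
    have hdist : eucDist (c + ξ • v) c ≤ Real.sqrt d / K := by
      have hterm : ∀ i : Fin d, ((c + ξ • v) i - c i)^2 ≤ (1/(K:ℝ))^2 := by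
        intro i
        have he : (c + ξ • v) i - c i = ξ * v i := by
          simp [Pi.add_apply, Pi.smul_apply, smul_eq_mul]
        rw [he]
        apply pow_le_pow_left₀ (mul_nonneg hξ.1.le (hv0 i))
        calc ξ * v i ≤ 1 * v i := mul_le_mul_of_nonneg_right hξ.2.le (hv0 i)
          _ = v i := one_mul _
          _ ≤ 1/K := hv1 i
      rw [eucDist]
      calc Real.sqrt (∑ i, ((c + ξ • v) i - c i)^2)
          ≤ Real.sqrt (∑ _i : Fin d, (1/(K:ℝ))^2) :=
            Real.sqrt_le_sqrt (Finset.sum_le_sum fun i _ => hterm i)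
        _ = Real.sqrt ((d:ℝ) * (1/K)^2) := by
            rw [Finset.sum_const, Finset.card_univ, Fintype.card_fin, nsmul_eq_mul]
        _ = Real.sqrt d * (1/K) := by
            rw [Real.sqrt_mul (Nat.cast_nonneg d), Real.sqrt_sq (by positivity)]
        _ = Real.sqrt d / K := by ring
    have hnum : |iteratedDeriv (n+1) (fun t : ℝ => f (c + t • v)) ξ
        - iteratedDeriv (n+1) (fun t : ℝ => f (c + t • v)) 0|
        ≤ (Real.sqrt d / K) ^ r * (∑ i, v i)^(n+1) := by
      rw [hid (n+1) le_rfl]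
      simp only [zero_smul, add_zero]
      rw [← Finset.sum_sub_distrib]
      refine (Finset.abs_sum_le_sum_abs _ _).trans ?_
      have hterm : ∀ α ∈ Finset.piAntidiag (Finset.univ : Finset (Fin d)) (n+1),
          |((n+1).factorial:ℝ)/(∏ i, ((α i).factorial:ℝ)) *
              multiPartialDeriv α f (c + ξ • v) * ∏ i, v i ^ α i
            - ((n+1).factorial:ℝ)/(∏ i, ((α i).factorial:ℝ)) *
              multiPartialDeriv α f c * ∏ i, v i ^ α i|
          ≤ (((n+1).factorial:ℝ)/(∏ i, ((α i).factorial:ℝ))) * ((Real.sqrt d / K) ^ r) *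
              ∏ i, v i ^ α i := by
        intro α hα
        rw [Finset.mem_piAntidiag] at hα
        have hC : (0:ℝ) ≤ ((n+1).factorial:ℝ)/(∏ i, ((α i).factorial:ℝ)) := by positivity
        have hP : (0:ℝ) ≤ ∏ i, v i ^ α i :=
          Finset.prod_nonneg fun i _ => pow_nonneg (hv0 i) _
        have hfactor : ((n+1).factorial:ℝ)/(∏ i, ((α i).factorial:ℝ)) *
              multiPartialDeriv α f (c + ξ • v) * (∏ i, v i ^ α i)
            - ((n+1).factorial:ℝ)/(∏ i, ((α i).factorial:ℝ)) *
              multiPartialDeriv α f c * (∏ i, v i ^ α i)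
            = ((n+1).factorial:ℝ)/(∏ i, ((α i).factorial:ℝ)) *
              (multiPartialDeriv α f (c + ξ • v) - multiPartialDeriv α f c) *
                (∏ i, v i ^ α i) := by ring
        rw [hfactor, abs_mul, abs_mul, abs_of_nonneg hC, abs_of_nonneg hP]
        have hHol : |multiPartialDeriv α f (c + ξ • v) - multiPartialDeriv α f c|
            ≤ (Real.sqrt d / K) ^ r := by
          refine (hholder α hα.1 (c + ξ • v) (hcube ξ hξmem) c hccube).trans ?_
          exact Real.rpow_le_rpow (Real.sqrt_nonneg _) hdist hr0.le
        exact mul_le_mul_of_nonneg_right (mul_le_mul_of_nonneg_left hHol hC) hP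
      refine (Finset.sum_le_sum hterm).trans ?_
      rw [Finset.sum_pow_eq_sum_piAntidiag, Finset.mul_sum]
      apply le_of_eq
      refine Finset.sum_congr rfl fun α hα => ?_
      rw [Finset.mem_piAntidiag] at hα
      have hmul : ((Nat.multinomial Finset.univ α : ℕ):ℝ)
          = ((n+1).factorial:ℝ)/(∏ i, ((α i).factorial:ℝ)) := by
        have hspec := Nat.multinomial_spec Finset.univ α
        rw [hα.1] at hspec
        have hne : (∏ i, ((α i).factorial:ℝ)) ≠ 0 := by positivity
        rw [eq_div_iff hne, mul_comm]
        exact_mod_cast hspec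
      rw [hmul]
      ring
    -- final numeric chain
    have hsumv0 : 0 ≤ ∑ i, v i := Finset.sum_nonneg fun i _ => hv0 i
    have hsumv : (∑ i, v i) ≤ (d:ℝ) / K := by
      calc (∑ i, v i) ≤ ∑ _i : Fin d, 1/(K:ℝ) := Finset.sum_le_sum fun i _ => hv1 i
        _ = (d:ℝ) * (1/K) := by
            rw [Finset.sum_const, Finset.card_univ, Fintype.card_fin, nsmul_eq_mul]
        _ = (d:ℝ) / K := by ring
    have hpow : (∑ i, v i)^(n+1) ≤ ((d:ℝ)/K)^(n+1) := pow_le_pow_left₀ hsumv0 hsumv _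
    have hrpow0 : (0:ℝ) ≤ (Real.sqrt d / K) ^ r := Real.rpow_nonneg (by positivity) r
    have hfac1 : (1:ℝ) ≤ ((n+1).factorial : ℝ) := by exact_mod_cast (n+1).factorial_pos
    have hnumeric : (Real.sqrt d / K) ^ r * ((d:ℝ)/K)^(n+1)
        ≤ (d : ℝ) ^ (((n+1:ℕ) : ℝ) + (((n+1:ℕ) : ℝ) + r) / 2) *
            (K : ℝ) ^ (-(((n+1:ℕ):ℝ) + r)) := by
      have hdpos' : (0:ℝ) < (d:ℝ) := by linarith
      have e1 : (Real.sqrt d / K) ^ r = (d:ℝ)^(r/2) / (K:ℝ)^r := by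
        rw [Real.div_rpow (Real.sqrt_nonneg _) hKpos.le]
        congr 1
        rw [Real.sqrt_eq_rpow, ← Real.rpow_mul (Nat.cast_nonneg d)]
        congr 1
        ring
      have e2 : ((d:ℝ)/K)^(n+1) = (d:ℝ)^(((n+1:ℕ)):ℝ) / (K:ℝ)^(((n+1:ℕ)):ℝ) := by
        rw [div_pow, Real.rpow_natCast, Real.rpow_natCast]
      rw [e1, e2, div_mul_div_comm, ← Real.rpow_add hdpos', ← Real.rpow_add hKpos,
        div_eq_mul_inv, ← Real.rpow_neg hKpos.le]
      have hKexp : -(r + ((n+1:ℕ):ℝ)) = -(((n+1:ℕ):ℝ) + r) := by ring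
      rw [hKexp]
      apply mul_le_mul_of_nonneg_right ?_ (Real.rpow_nonneg hKpos.le _)
      apply Real.rpow_le_rpow_of_exponent_le hd1
      have : 0 ≤ ((n+1:ℕ):ℝ) := by positivity
      push_cast
      linarith
    calc |iteratedDeriv (n+1) (fun t : ℝ => f (c + t • v)) ξ
          - iteratedDeriv (n+1) (fun t : ℝ => f (c + t • v)) 0| / ((n+1).factorial : ℝ)
        ≤ |iteratedDeriv (n+1) (fun t : ℝ => f (c + t • v)) ξ
          - iteratedDeriv (n+1) (fun t : ℝ => f (c + t • v)) 0| :=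
          div_le_self (abs_nonneg _) hfac1
      _ ≤ (Real.sqrt d / K) ^ r * (∑ i, v i)^(n+1) := hnum
      _ ≤ (Real.sqrt d / K) ^ r * ((d:ℝ)/K)^(n+1) :=
          mul_le_mul_of_nonneg_left hpow hrpow0
      _ ≤ _ := hnumeric
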